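/- Let s be a natural number, a an integer, and let b, c be integers with b ≥ max{s + 2a + 16, s + 6}. Let G be a finite simple graph and S ⊆ V(G) with |S| = s. If E(G;S,q) = a·q² − b·q + c as polynomials in q, then for every k with 1 ≤ k ≤ s, Σ_{W ⊆ S, |W| = k} |Obs(G;W)| = C(s−2, k−2) · Σ_{W ⊆ S, |W| = 2} |Obs(G;W)| + ( C(s−1, k−1) − (s−1)·C(s−2, k−2) ) · Σ_{v ∈ S} |Obs(G;{v})|, where C(·,·) denotes a binomial coefficient (equal to 0 when the lower index is negative or exceeds the upper index). -/

import Mathlib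

open Polynomial

/-- The closed neighborhood `N[S]` of a set of vertices. -/
def closedNbhd {V : Type*} (G : SimpleGraph V) (S : Set V) : Set V :=
  ⋃ v ∈ S, insert v (G.neighborSet v)

/-- A set `B` is closed under the zero forcing step: whenever `x ∈ B` has exactly one
neighbor `y` outside `B`, then `y` is already in `B`. -/
def PDClosed {V : Type*} (G : SimpleGraph V) (B : Set V) : Prop :=
  ∀ x ∈ B, ∀ y : V, G.neighborSet x \ B = {y} → y ∈ B

/-- `Obs G S` is the set of observed vertices of the power domination process started with
PMU placement `S`: the least superset of `N[S]` closed under the zero forcing step. -/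
def Obs {V : Type*} (G : SimpleGraph V) (S : Set V) : Set V :=
  ⋂₀ {B : Set V | closedNbhd G S ⊆ B ∧ PDClosed G B}

/-- The expected value polynomial
`E(G;S,q) = Σ_{W ⊆ S} |Obs(G;W)| q^{|S∖W|} (1−q)^{|W|}`. -/
noncomputable def expol {V : Type*} (G : SimpleGraph V) (S : Finset V) : Polynomial ℝ :=
  ∑ W ∈ S.powerset,
    ((Obs G ↑W).ncard : Polynomial ℝ) * X ^ (S.card - W.card) * (1 - X) ^ W.card

lemma obs_empty {V : Type*} (G : SimpleGraph V) : Obs G (∅ : Set V) = ∅ := by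
  have h : (∅ : Set V) ∈ {B : Set V | closedNbhd G (∅ : Set V) ⊆ B ∧ PDClosed G B} := by
    refine ⟨by simp [closedNbhd], ?_⟩
    intro x hx
    exact absurd hx (Set.notMem_empty x)
  exact Set.eq_empty_of_subset_empty (Set.sInter_subset_of_mem h)

lemma key {V : Type} [Fintype V] (G : SimpleGraph V) (S : Finset V) (a b c : ℝ)
    (hE : expol G S = C a * X ^ 2 - C b * X + C c) (hs2 : 2 ≤ S.card) :
    ∀ k ≤ S.card, (∑ W ∈ Finset.powersetCard k S, ((Obs G ↑W).ncard : ℝ))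
      = a * (S.card - 2).choose k - b * (S.card - 1).choose k + c * (S.card).choose k := by
  set s := S.card with hs
  set P : Polynomial ℝ := ∑ i ∈ Finset.range (s + 1),
      Polynomial.monomial i (∑ W ∈ Finset.powersetCard i S, ((Obs G ↑W).ncard : ℝ)) with hP
  set Q : Polynomial ℝ := C a * (X + 1) ^ (s - 2) - C b * (X + 1) ^ (s - 1)
      + C c * (X + 1) ^ s with hQ
  have hPQ : P = Q := by
    apply Polynomial.eq_of_infinite_eval_eq
    apply Set.Infinite.mono ?_ (Set.Ioi_infinite (0 : ℝ))
    intro t ht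
    simp only [Set.mem_Ioi] at ht
    simp only [Set.mem_setOf_eq]
    have hu : t + 1 ≠ 0 := by positivity
    -- evaluate hE at 1/(t+1)
    have hEv := congrArg (Polynomial.eval (1 / (t + 1))) hE
    simp only [expol, Polynomial.eval_finset_sum, Polynomial.eval_mul, Polynomial.eval_pow,
      Polynomial.eval_sub, Polynomial.eval_add, Polynomial.eval_one, Polynomial.eval_X,
      Polynomial.eval_natCast, Polynomial.eval_C] at hEv
    have hmul := congrArg (fun r => (t + 1) ^ s * r) hEv
    rw [Finset.mul_sum] at hmul
    have hL : ∀ W ∈ S.powerset,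
        (t + 1) ^ s * (((Obs G (↑W : Set V)).ncard : ℝ) * (1 / (t + 1)) ^ (s - W.card)
          * (1 - 1 / (t + 1)) ^ W.card)
        = ((Obs G (↑W : Set V)).ncard : ℝ) * t ^ W.card := by
      intro W hW
      have hw : W.card ≤ s := Finset.card_le_card (Finset.mem_powerset.mp hW)
      have h1 : (1 : ℝ) - 1 / (t + 1) = t / (t + 1) := by field_simp; ring
      have h2 : (t + 1) ^ s = (t + 1) ^ (s - W.card) * (t + 1) ^ W.card := by
        rw [← pow_add, Nat.sub_add_cancel hw]
      rw [h1, h2]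
      have hA := pow_ne_zero (s - W.card) hu
      have hB := pow_ne_zero W.card hu
      rw [one_div_pow, div_pow]
      rw [show ∀ x y z u : ℝ, x * y * (z * (1 / x) * (u / y)) = z * u * (x / x) * (y / y) by intros; ring,
        div_self hA, div_self hB, mul_one, mul_one]
    rw [Finset.sum_congr rfl hL] at hmul
    -- RHS of hmul
    have e2 : (t + 1) ^ s * (1 / (t + 1)) ^ 2 = (t + 1) ^ (s - 2) := by
      have h2 : (t + 1) ^ s = (t + 1) ^ (s - 2) * (t + 1) ^ 2 := by
        rw [← pow_add, Nat.sub_add_cancel hs2]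
      rw [h2, one_div, inv_pow]
      field_simp
    have e1 : (t + 1) ^ s * (1 / (t + 1)) = (t + 1) ^ (s - 1) := by
      have h2 : (t + 1) ^ s = (t + 1) ^ (s - 1) * (t + 1) ^ 1 := by
        rw [← pow_add, Nat.sub_add_cancel (le_trans (by norm_num) hs2)]
      rw [h2, one_div, pow_one]
      field_simp
    have hR : (t + 1) ^ s * (a * (1 / (t + 1)) ^ 2 - b * (1 / (t + 1)) + c)
        = a * (t + 1) ^ (s - 2) - b * (t + 1) ^ (s - 1) + c * (t + 1) ^ s := by
      rw [← e2, ← e1]; ring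
    rw [hR] at hmul
    -- LHS of hmul as eval of P
    have hPE : Polynomial.eval t P
        = ∑ W ∈ S.powerset, ((Obs G (↑W : Set V)).ncard : ℝ) * t ^ W.card := by
      rw [hP]
      rw [Polynomial.eval_finset_sum]
      simp only [Polynomial.eval_monomial]
      rw [Finset.powerset_card_disjiUnion S]; erw [Finset.sum_disjiUnion]
      refine Finset.sum_congr rfl ?_
      intro i _
      rw [Finset.sum_mul]
      refine Finset.sum_congr rfl ?_
      intro W hW
      rw [(Finset.mem_powersetCard.mp hW).2]
    have hQE : Polynomial.eval t Q
        = a * (t + 1) ^ (s - 2) - b * (t + 1) ^ (s - 1) + c * (t + 1) ^ s := by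
      simp [hQ]
    rw [hPE, hQE, hmul]
  intro k hk
  have hco := congrArg (fun p => Polynomial.coeff p k) hPQ
  simp only [hP, hQ, Polynomial.finset_sum_coeff, Polynomial.coeff_monomial,
    Polynomial.coeff_add, Polynomial.coeff_sub, Polynomial.coeff_C_mul,
    Polynomial.coeff_X_add_one_pow] at hco
  rw [Finset.sum_ite_eq' (Finset.range (s + 1)) k] at hco
  rw [if_pos (Finset.mem_range.mpr (Nat.lt_succ_of_le hk))] at hco
  exact hco

theorem stmt5 {V : Type} [Fintype V] (G : SimpleGraph V) (S : Finset V)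
    (s : ℕ) (hs : S.card = s) (a b c : ℤ)
    (hb : max ((s : ℤ) + 2 * a + 16) ((s : ℤ) + 6) ≤ b)
    (hE : expol G S = Polynomial.C (a : ℝ) * X ^ 2 - Polynomial.C (b : ℝ) * X
            + Polynomial.C (c : ℝ)) :
    ∀ k, 1 ≤ k → k ≤ s →
      (∑ W ∈ Finset.powersetCard k S, ((Obs G ↑W).ncard : ℤ))
        = (if 2 ≤ k then (((s - 2).choose (k - 2) : ℕ) : ℤ) else 0)
              * (∑ W ∈ Finset.powersetCard 2 S, ((Obs G ↑W).ncard : ℤ))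
          + ((((s - 1).choose (k - 1) : ℕ) : ℤ)
                - ((s : ℤ) - 1) * (if 2 ≤ k then (((s - 2).choose (k - 2) : ℕ) : ℤ) else 0))
              * (∑ v ∈ S, ((Obs G {v}).ncard : ℤ)) := by
  intro k hk1 hks
  subst hs
  have hsZ : (∑ W ∈ Finset.powersetCard 1 S, ((Obs G ↑W).ncard : ℤ))
      = ∑ v ∈ S, ((Obs G ({v} : Set V)).ncard : ℤ) := by
    rw [Finset.powersetCard_one, Finset.sum_map]
    simp
  rcases Nat.lt_or_ge k 3 with h3 | h3
  · interval_cases k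
    · rw [if_neg (by omega)]
      simpa using hsZ
    · rw [if_pos le_rfl]
      have e0 : (S.card - 2).choose 0 = 1 := Nat.choose_zero_right _
      have e1 : (S.card - 1).choose 1 = S.card - 1 := Nat.choose_one_right _
      have ec : ((S.card - 1 : ℕ) : ℤ) = (S.card : ℤ) - 1 := by
        have : 2 ≤ S.card := hks
        omega
      rw [e0, e1, ec]
      push_cast
      ring
  · have hs3 : 3 ≤ S.card := le_trans h3 hks
    obtain ⟨m, hm⟩ : ∃ m, S.card = m + 3 := ⟨S.card - 3, by omega⟩
    obtain ⟨j, hj⟩ : ∃ j, k = j + 3 := ⟨k - 3, by omega⟩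
    subst hj
    have hs2 : 2 ≤ S.card := by omega
    have h0 := key G S (a : ℝ) (b : ℝ) (c : ℝ) hE hs2 0 (Nat.zero_le _)
    have h1 := key G S (a : ℝ) (b : ℝ) (c : ℝ) hE hs2 1 (by omega)
    have h2 := key G S (a : ℝ) (b : ℝ) (c : ℝ) hE hs2 2 (by omega)
    have hk := key G S (a : ℝ) (b : ℝ) (c : ℝ) hE hs2 (j + 3) hks
    simp only [Finset.powersetCard_zero, Finset.sum_singleton, Finset.coe_empty, obs_empty,
      Set.ncard_empty, Nat.cast_zero, Nat.choose_zero_right, Nat.cast_one, mul_one] at h0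
    have hc : c = b - a := by
      have hcR : (c : ℝ) = (b : ℝ) - a := by linarith
      exact_mod_cast hcR
    -- integer versions
    have h1Z : (∑ W ∈ Finset.powersetCard 1 S, ((Obs G ↑W).ncard : ℤ))
        = a * (S.card - 2).choose 1 - b * (S.card - 1).choose 1 + c * S.card.choose 1 := by
      exact_mod_cast h1
    have h2Z : (∑ W ∈ Finset.powersetCard 2 S, ((Obs G ↑W).ncard : ℤ))
        = a * (S.card - 2).choose 2 - b * (S.card - 1).choose 2 + c * S.card.choose 2 := by
      exact_mod_cast h2
    have hkZ : (∑ W ∈ Finset.powersetCard (j + 3) S, ((Obs G ↑W).ncard : ℤ))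
        = a * (S.card - 2).choose (j + 3) - b * (S.card - 1).choose (j + 3)
          + c * S.card.choose (j + 3) := by
      exact_mod_cast hk
    rw [if_pos (by omega)]
    rw [hkZ, h2Z, ← hsZ, h1Z, hm, hc]
    have e2 : m + 3 - 2 = m + 1 := rfl
    have e1' : m + 3 - 1 = m + 2 := rfl
    have f2 : j + 3 - 2 = j + 1 := rfl
    have f1 : j + 3 - 1 = j + 2 := rfl
    rw [e2, e1', f2, f1]
    -- Pascal expansions down to top m+1
    have p1 : (m + 2).choose (j + 3) = (m + 1).choose (j + 2) + (m + 1).choose (j + 3) := by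
      rw [show m + 2 = (m + 1) + 1 from rfl, show j + 3 = (j + 2) + 1 from rfl]
      exact Nat.choose_succ_succ _ _
    have p2 : (m + 3).choose (j + 3) = (m + 2).choose (j + 2) + (m + 2).choose (j + 3) := by
      rw [show m + 3 = (m + 2) + 1 from rfl, show j + 3 = (j + 2) + 1 from rfl]
      exact Nat.choose_succ_succ _ _
    have p3 : (m + 2).choose (j + 2) = (m + 1).choose (j + 1) + (m + 1).choose (j + 2) := by
      rw [show m + 2 = (m + 1) + 1 from rfl, show j + 2 = (j + 1) + 1 from rfl]
      exact Nat.choose_succ_succ _ _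
    have q1 : (m + 2).choose 2 = (m + 1).choose 1 + (m + 1).choose 2 := by
      rw [show m + 2 = (m + 1) + 1 from rfl, show (2 : ℕ) = 1 + 1 from rfl]
      exact Nat.choose_succ_succ _ _
    have q2 : (m + 3).choose 2 = (m + 2).choose 1 + (m + 2).choose 2 := by
      rw [show m + 3 = (m + 2) + 1 from rfl, show (2 : ℕ) = 1 + 1 from rfl]
      exact Nat.choose_succ_succ _ _
    rw [p2, p1, p3, q2, q1]
    simp only [Nat.choose_one_right]
    push_cast
    ring
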